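/- arXiv:2106.07760 — 4 statements merged into one kernel-verified Lean document; each statement's English description precedes it below -/
import Mathlib

section
/- Let H : [1,C] → ℝ_{≥0} with all H_c ≥ 0, not all zero, and let g : V × [1,C] → ℝ with ĝ_{ec} ≥ ĝ_min ≥ 0 for all e, c, where ĝ_min = min over all e,c of ĝ_{ec}. Define f₂(S) = −log( Σ_{c=1}^C H_c · exp(−λ Σ_{j∈S} ĝ_{jc}) ) for λ > 0. Then for any set X ⊆ V and element e ∉ X, the marginal gain satisfies f₂(e|X) ≥ λ · ĝ_min. -/
open Real in
/-- Lower bound on the marginal gain of the RETRIEVE set function `f₂`. -/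
theorem retrieve_gain_lower_bound {V : Type*} [DecidableEq V]
    (C : ℕ) (hC : 1 ≤ C) (H : Fin C → ℝ) (hH : ∀ c, 0 ≤ H c)
    (hHne : ∃ c, 0 < H c)
    (g : V → Fin C → ℝ) (gmin lam : ℝ) (hlam : 0 < lam)
    (hgmin0 : 0 ≤ gmin) (hgmin : ∀ e c, gmin ≤ g e c)
    (f₂ : Finset V → ℝ)
    (hf₂ : ∀ S : Finset V,
      f₂ S = -Real.log (∑ c, H c * Real.exp (-lam * ∑ j ∈ S, g j c))) :
    ∀ (X : Finset V) (e : V), e ∉ X →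
      f₂ (insert e X) - f₂ X ≥ lam * gmin := by
  intro X e he
  obtain ⟨c₀, hc₀⟩ := hHne
  set A : ℝ := ∑ c, H c * Real.exp (-lam * ∑ j ∈ X, g j c) with hA
  set B : ℝ := ∑ c, H c * Real.exp (-lam * ∑ j ∈ insert e X, g j c) with hB
  have hApos : 0 < A := by
    apply Finset.sum_pos' (fun c _ => mul_nonneg (hH c) (Real.exp_pos _).le)
    exact ⟨c₀, Finset.mem_univ _, mul_pos hc₀ (Real.exp_pos _)⟩
  have hBpos : 0 < B := by
    apply Finset.sum_pos' (fun c _ => mul_nonneg (hH c) (Real.exp_pos _).le)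
    exact ⟨c₀, Finset.mem_univ _, mul_pos hc₀ (Real.exp_pos _)⟩
  have hkey : B ≤ Real.exp (-lam * gmin) * A := by
    rw [hA, hB, Finset.mul_sum]
    apply Finset.sum_le_sum
    intro c _
    rw [Finset.sum_insert he]
    have : Real.exp (-lam * (g e c + ∑ j ∈ X, g j c))
        = Real.exp (-lam * g e c) * Real.exp (-lam * ∑ j ∈ X, g j c) := by
      rw [← Real.exp_add]; ring_nf
    rw [this]
    have h1 : Real.exp (-lam * g e c) ≤ Real.exp (-lam * gmin) := by
      apply Real.exp_le_exp.2; nlinarith [hgmin e c]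
    nlinarith [Real.exp_pos (-lam * ∑ j ∈ X, g j c), hH c,
      mul_nonneg (hH c) (Real.exp_pos (-lam * ∑ j ∈ X, g j c)).le]
  have hlog : Real.log B ≤ -lam * gmin + Real.log A := by
    calc Real.log B ≤ Real.log (Real.exp (-lam * gmin) * A) :=
          Real.log_le_log hBpos hkey
      _ = -lam * gmin + Real.log A := by
          rw [Real.log_mul (Real.exp_ne_zero _) hApos.ne', Real.log_exp]
  rw [hf₂, hf₂, ← hA, ← hB]
  linarith
end

section
/- Let f₂(S) = −log( Σ_{c=1}^C H_c · exp(−λ Σ_{j∈S} ĝ_{jc}) ) with H_c ≥ 0 not all zero, λ > 0, and suppose 1 ≤ ĝ_{jc} ≤ G for all j ∈ V, c ∈ [1,C], where G ≥ 1. Then f₂ is α-submodular with α = 1 − 1/G; i.e., for all X ⊆ Y ⊆ V and e ∉ Y, f₂(e|X) ≥ (1/G) f₂(e|Y). -/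
/-- The RETRIEVE set function `f₂` with gains `ĝ_{jc} ∈ [1, G]` is
`α`-submodular with `α = 1 - 1/G`. -/
theorem retrieve_alpha_submodular {V : Type*} [DecidableEq V]
    (C : ℕ) (hC : 1 ≤ C) (H : Fin C → ℝ) (hH : ∀ c, 0 ≤ H c)
    (hHne : ∃ c, 0 < H c)
    (g : V → Fin C → ℝ) (G lam : ℝ) (hlam : 0 < lam) (hG : 1 ≤ G)
    (hg1 : ∀ j c, 1 ≤ g j c) (hgG : ∀ j c, g j c ≤ G)
    (f₂ : Finset V → ℝ)
    (hf₂ : ∀ S : Finset V,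
      f₂ S = -Real.log (∑ c, H c * Real.exp (-lam * ∑ j ∈ S, g j c))) :
    ∀ (X Y : Finset V) (e : V), X ⊆ Y → e ∉ Y →
      f₂ (insert e X) - f₂ X ≥ (1 / G) * (f₂ (insert e Y) - f₂ Y) := by
  intro X Y e hXY heY
  set A : Finset V → ℝ := fun S => ∑ c, H c * Real.exp (-lam * ∑ j ∈ S, g j c) with hA
  have hApos : ∀ S, 0 < A S := by
    intro S
    obtain ⟨c0, hc0⟩ := hHne
    refine Finset.sum_pos' (fun c _ => mul_nonneg (hH c) (Real.exp_pos _).le)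
      ⟨c0, Finset.mem_univ _, mul_pos hc0 (Real.exp_pos _)⟩
  have key : ∀ (S : Finset V), e ∉ S →
      lam ≤ f₂ (insert e S) - f₂ S ∧ f₂ (insert e S) - f₂ S ≤ lam * G := by
    intro S heS
    have hsum : ∀ c, ∑ j ∈ insert e S, g j c = g e c + ∑ j ∈ S, g j c :=
      fun c => Finset.sum_insert heS
    have hub : A (insert e S) ≤ Real.exp (-lam) * A S := by
      rw [hA]
      calc (∑ c, H c * Real.exp (-lam * ∑ j ∈ insert e S, g j c))
          ≤ ∑ c, Real.exp (-lam) * (H c * Real.exp (-lam * ∑ j ∈ S, g j c)) := by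
            refine Finset.sum_le_sum fun c _ => ?_
            rw [hsum c]
            have h1 : Real.exp (-lam * (g e c + ∑ j ∈ S, g j c)) ≤
                Real.exp (-lam) * Real.exp (-lam * ∑ j ∈ S, g j c) := by
              rw [← Real.exp_add]
              apply Real.exp_le_exp.2
              nlinarith [hg1 e c]
            calc H c * Real.exp (-lam * (g e c + ∑ j ∈ S, g j c))
                ≤ H c * (Real.exp (-lam) * Real.exp (-lam * ∑ j ∈ S, g j c)) :=
                  mul_le_mul_of_nonneg_left h1 (hH c)
              _ = Real.exp (-lam) * (H c * Real.exp (-lam * ∑ j ∈ S, g j c)) := by ring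
        _ = Real.exp (-lam) * ∑ c, H c * Real.exp (-lam * ∑ j ∈ S, g j c) :=
            (Finset.mul_sum _ _ _).symm
    have hlb : Real.exp (-(lam * G)) * A S ≤ A (insert e S) := by
      rw [hA]
      calc Real.exp (-(lam * G)) * ∑ c, H c * Real.exp (-lam * ∑ j ∈ S, g j c)
          = ∑ c, Real.exp (-(lam * G)) * (H c * Real.exp (-lam * ∑ j ∈ S, g j c)) :=
            Finset.mul_sum _ _ _
        _ ≤ ∑ c, H c * Real.exp (-lam * ∑ j ∈ insert e S, g j c) := by
            refine Finset.sum_le_sum fun c _ => ?_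
            rw [hsum c]
            have h1 : Real.exp (-(lam * G)) * Real.exp (-lam * ∑ j ∈ S, g j c) ≤
                Real.exp (-lam * (g e c + ∑ j ∈ S, g j c)) := by
              rw [← Real.exp_add]
              apply Real.exp_le_exp.2
              nlinarith [hgG e c]
            calc Real.exp (-(lam * G)) * (H c * Real.exp (-lam * ∑ j ∈ S, g j c))
                = H c * (Real.exp (-(lam * G)) * Real.exp (-lam * ∑ j ∈ S, g j c)) := by ring
              _ ≤ H c * Real.exp (-lam * (g e c + ∑ j ∈ S, g j c)) :=
                  mul_le_mul_of_nonneg_left h1 (hH c)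
    have hgain : f₂ (insert e S) - f₂ S = Real.log (A S) - Real.log (A (insert e S)) := by
      rw [hf₂, hf₂]; ring
    constructor
    · have := Real.log_le_log (hApos (insert e S)) hub
      rw [Real.log_mul (Real.exp_ne_zero _) (hApos S).ne', Real.log_exp] at this
      rw [hgain]; linarith
    · have := Real.log_le_log (mul_pos (Real.exp_pos _) (hApos S)) hlb
      rw [Real.log_mul (Real.exp_ne_zero _) (hApos S).ne', Real.log_exp] at this
      rw [hgain]; linarith
  obtain ⟨hX1, _⟩ := key X (fun h => heY (hXY h))
  obtain ⟨_, hY2⟩ := key Y heY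
  have hGpos : (0:ℝ) < G := lt_of_lt_of_le one_pos hG
  have h1 : (1 / G) * (f₂ (insert e Y) - f₂ Y) ≤ (1 / G) * (lam * G) := by
    apply mul_le_mul_of_nonneg_left hY2 (by positivity)
  have h2 : (1 / G) * (lam * G) = lam := by field_simp
  linarith
end

section
/- Let f be a monotone nondecreasing, α-submodular set function with f(∅) = 0 and α ∈ [0,1). Let S_k be the set produced by the greedy algorithm that adds k elements one at a time, each maximizing marginal gain. Then f(S_k) ≥ (1 − e^{−(1−α)}) · max_{|S| ≤ k} f(S). -/
/-- Greedy guarantee for monotone `α`-submodular maximization under a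
cardinality constraint: `f(S_k) ≥ (1 − e^{−(1−α)}) max_{|S| ≤ k} f S`. -/
theorem greedy_alpha_submodular_guarantee {V : Type*} [DecidableEq V] [Fintype V]
    (f : Finset V → ℝ) (α : ℝ) (hα0 : 0 ≤ α) (hα1 : α < 1)
    (hmono : ∀ X Y : Finset V, X ⊆ Y → f X ≤ f Y)
    (hempty : f ∅ = 0)
    (hα : ∀ (X Y : Finset V) (e : V), X ⊆ Y → e ∉ Y →
      f (insert e X) - f X ≥ (1 - α) * (f (insert e Y) - f Y))
    (k : ℕ) (S : ℕ → Finset V)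
    (hS0 : S 0 = ∅)
    (hgreedy : ∀ i < k, ∃ e : V, S (i + 1) = insert e (S i) ∧
      ∀ e' : V, f (insert e' (S i)) - f (S i) ≤ f (insert e (S i)) - f (S i)) :
    ∀ T : Finset V, T.card ≤ k →
      f (S k) ≥ (1 - Real.exp (-(1 - α))) * f T := by
  intro T hT
  have h1α : (0:ℝ) < 1 - α := by linarith
  have hnn : ∀ (X : Finset V) (e : V), 0 ≤ f (insert e X) - f X := fun X e =>
    sub_nonneg.2 (hmono X _ (Finset.subset_insert e X))
  have hfT0 : 0 ≤ f T := by
    have := hmono ∅ T (Finset.empty_subset T); linarith [hempty ▸ this]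
  rcases Nat.eq_zero_or_pos k with hk | hk
  · subst hk
    have hTe : T = ∅ := Finset.card_eq_zero.mp (Nat.le_zero.mp hT)
    subst hTe
    rw [hempty, mul_zero, hS0, hempty]
  have kpos : (0:ℝ) < (k:ℝ) := by exact_mod_cast hk
  -- telescoping claim
  have claim : ∀ (B A : Finset V),
      (1 - α) * (f (A ∪ B) - f A) ≤ ∑ e ∈ B, (f (insert e A) - f A) := by
    intro B
    induction B using Finset.induction_on with
    | empty => intro A; simp
    | insert _ _ ha ih =>
      rename_i a B'
      intro A
      rw [Finset.sum_insert ha]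
      have ihA := ih A
      by_cases haA : a ∈ A ∪ B'
      · have heq : A ∪ insert a B' = A ∪ B' := by
          rw [Finset.union_insert, Finset.insert_eq_self.2 haA]
        rw [heq]
        have := hnn A a
        linarith
      · have heq : A ∪ insert a B' = insert a (A ∪ B') := Finset.union_insert a A B'
        rw [heq]
        have hstep := hα A (A ∪ B') a Finset.subset_union_left haA
        linarith
  -- one greedy step
  set c : ℝ := 1 - (1 - α) / k with hc
  have hc0 : 0 ≤ c := by
    rw [hc]
    have : (1 - α) / k ≤ 1 := by
      rw [div_le_one kpos]
      have : (1:ℝ) ≤ (k:ℝ) := by exact_mod_cast hk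
      linarith
    linarith
  have step : ∀ i < k, f T - f (S (i + 1)) ≤ c * (f T - f (S i)) := by
    intro i hi
    obtain ⟨e, hSe, hmax⟩ := hgreedy i hi
    set δ : ℝ := f (insert e (S i)) - f (S i) with hδ
    have hδ0 : 0 ≤ δ := hnn _ _
    have hsum : ∑ e' ∈ T, (f (insert e' (S i)) - f (S i)) ≤ (k:ℝ) * δ := by
      calc ∑ e' ∈ T, (f (insert e' (S i)) - f (S i)) ≤ ∑ _e' ∈ T, δ :=
            Finset.sum_le_sum (fun e' _ => hmax e')
        _ = (T.card : ℝ) * δ := by rw [Finset.sum_const, nsmul_eq_mul]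
        _ ≤ (k:ℝ) * δ := by
            apply mul_le_mul_of_nonneg_right _ hδ0
            exact_mod_cast hT
    have hmonoT : f T ≤ f (S i ∪ T) := hmono T _ Finset.subset_union_right
    have hkey : (1 - α) * (f T - f (S i)) ≤ (k:ℝ) * δ := by
      have := claim T (S i)
      nlinarith
    have hnew : f (S (i + 1)) = f (S i) + δ := by rw [hSe, hδ]; ring
    rw [hnew, hc]
    have hdiv : (1 - α) / k * (f T - f (S i)) ≤ δ := by
      rw [div_mul_eq_mul_div, div_le_iff₀ kpos]
      nlinarith
    nlinarith
  -- induct to k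
  have hind : ∀ i ≤ k, f T - f (S i) ≤ c ^ i * f T := by
    intro i
    induction i with
    | zero => intro _; simp [hS0, hempty]
    | succ n ihn =>
      intro hn
      have h1 := step n (by omega)
      have h2 := ihn (by omega)
      calc f T - f (S (n + 1)) ≤ c * (f T - f (S n)) := h1
        _ ≤ c * (c ^ n * f T) := mul_le_mul_of_nonneg_left h2 hc0
        _ = c ^ (n + 1) * f T := by ring
  have hck : c ^ k ≤ Real.exp (-(1 - α)) := by
    have h1 : c ≤ Real.exp (-(1 - α) / k) := by
      rw [hc, neg_div]
      linarith [Real.add_one_le_exp (-((1 - α) / (k:ℝ)))]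
    calc c ^ k ≤ Real.exp (-(1 - α) / k) ^ k := pow_le_pow_left₀ hc0 h1 k
      _ = Real.exp (-(1 - α) / k * k) := by rw [← Real.exp_nat_mul]; ring_nf
      _ = Real.exp (-(1 - α)) := by rw [div_mul_cancel₀]; exact ne_of_gt kpos
  have hfk := hind k le_rfl
  have : c ^ k * f T ≤ Real.exp (-(1 - α)) * f T :=
    mul_le_mul_of_nonneg_right hck hfT0
  nlinarith
end

section
/- Let f₂(S) = −log( Σ_{c=1}^C H_c exp(−λ Σ_{j∈S} ĝ_{jc}) ) with H_c ≥ 0 not all zero, λ > 0, and 1 ≤ ĝ_{jc} ≤ G for all j, c. Then for any two sets X ⊆ Y and any element e ∉ Y, the ratio of marginal gains satisfies f₂(e|X) / f₂(e|Y) ≥ 1/G (both gains are positive). -/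
/-- Ratio of marginal gains of the RETRIEVE set function `f₂` is at least `1/G`
(both gains are positive). -/
theorem retrieve_gain_ratio {V : Type*} [DecidableEq V]
    (C : ℕ) (hC : 1 ≤ C) (H : Fin C → ℝ) (hH : ∀ c, 0 ≤ H c)
    (hHne : ∃ c, 0 < H c)
    (g : V → Fin C → ℝ) (G lam : ℝ) (hlam : 0 < lam) (hG : 1 ≤ G)
    (hg1 : ∀ j c, 1 ≤ g j c) (hgG : ∀ j c, g j c ≤ G)
    (f₂ : Finset V → ℝ)
    (hf₂ : ∀ S : Finset V,
      f₂ S = -Real.log (∑ c, H c * Real.exp (-lam * ∑ j ∈ S, g j c))) :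
    ∀ (X Y : Finset V) (e : V), X ⊆ Y → e ∉ Y →
      0 < f₂ (insert e X) - f₂ X ∧ 0 < f₂ (insert e Y) - f₂ Y ∧
        (f₂ (insert e X) - f₂ X) / (f₂ (insert e Y) - f₂ Y) ≥ 1 / G := by
  intro X Y e hXY heY
  have heX : e ∉ X := fun h => heY (hXY h)
  have key : ∀ (S : Finset V), e ∉ S →
      lam ≤ f₂ (insert e S) - f₂ S ∧ f₂ (insert e S) - f₂ S ≤ lam * G := by
    intro S heS
    set A := ∑ c, H c * Real.exp (-lam * ∑ j ∈ S, g j c) with hA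
    set B := ∑ c, H c * Real.exp (-lam * ∑ j ∈ insert e S, g j c) with hB
    have hApos : 0 < A := by
      obtain ⟨c, hc⟩ := hHne
      exact Finset.sum_pos' (fun i _ => mul_nonneg (hH i) (Real.exp_pos _).le)
        ⟨c, Finset.mem_univ c, mul_pos hc (Real.exp_pos _)⟩
    have hBpos : 0 < B := by
      obtain ⟨c, hc⟩ := hHne
      exact Finset.sum_pos' (fun i _ => mul_nonneg (hH i) (Real.exp_pos _).le)
        ⟨c, Finset.mem_univ c, mul_pos hc (Real.exp_pos _)⟩
    have hsum : ∀ c, (∑ j ∈ insert e S, g j c) = g e c + ∑ j ∈ S, g j c :=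
      fun c => Finset.sum_insert heS
    have hBle : B ≤ Real.exp (-lam) * A := by
      rw [hB, hA, Finset.mul_sum]
      apply Finset.sum_le_sum
      intro c _
      rw [hsum c, mul_comm (Real.exp (-lam)), mul_assoc]
      apply mul_le_mul_of_nonneg_left _ (hH c)
      rw [← Real.exp_add]
      apply Real.exp_le_exp.2
      have := hg1 e c
      nlinarith
    have hBge : Real.exp (-lam * G) * A ≤ B := by
      rw [hB, hA, Finset.mul_sum]
      apply Finset.sum_le_sum
      intro c _
      rw [hsum c, mul_comm (Real.exp (-lam * G)), mul_assoc]
      apply mul_le_mul_of_nonneg_left _ (hH c)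
      rw [← Real.exp_add]
      apply Real.exp_le_exp.2
      have := hgG e c
      nlinarith
    have hf : f₂ (insert e S) - f₂ S = Real.log A - Real.log B := by
      rw [hf₂, hf₂]; ring
    constructor
    · rw [hf]
      have h1 : Real.log B ≤ Real.log (Real.exp (-lam) * A) :=
        Real.log_le_log hBpos hBle
      rw [Real.log_mul (Real.exp_ne_zero _) (ne_of_gt hApos), Real.log_exp] at h1
      linarith
    · rw [hf]
      have h1 : Real.log (Real.exp (-lam * G) * A) ≤ Real.log B :=
        Real.log_le_log (by positivity) hBge
      rw [Real.log_mul (Real.exp_ne_zero _) (ne_of_gt hApos), Real.log_exp] at h1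
      linarith
  obtain ⟨hX1, hX2⟩ := key X heX
  obtain ⟨hY1, hY2⟩ := key Y heY
  have hYpos : 0 < f₂ (insert e Y) - f₂ Y := lt_of_lt_of_le hlam hY1
  refine ⟨lt_of_lt_of_le hlam hX1, hYpos, ?_⟩
  rw [ge_iff_le, div_le_div_iff₀ (by positivity) hYpos]
  nlinarith [mul_nonneg (sub_nonneg.2 hX1) (le_trans zero_le_one hG)]
end
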